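/- Let 𝔫 be a finite-dimensional real 2-step nilpotent Lie algebra that is non-singular, with BCH group law ∘, complement V∞ of ⁅𝔫, 𝔫⁆, projection π, norm ‖·‖∞ on V∞, and norm ‖·‖_Z on ⁅𝔫, 𝔫⁆. Let d be a left-invariant metric on 𝔫 such that: (i) for every R > 0, π({h ∈ 𝔫 : d(0, h) ≤ R}) = {v ∈ V∞ : ‖v‖∞ ≤ R}; and (ii) there is K′ > 0 such that for every ρ ≥ 1 and all x, y ∈ 𝔫 with d(0, x) ≤ ρ, d(0, y) ≤ ρ and (−x) ∘ y ∈ ⁅𝔫, 𝔫⁆, one has ‖(−x) ∘ y‖_Z ≤ K′ρ². Then there exists K > 0 such that for every integer M ≥ 1, every real t ≥ M, every R with 0 < R < 1, and all h₁, …, h_M ∈ 𝔫 with d(0, h_i) = t/M for each i and d(0, h₁ ∘ ⋯ ∘ h_M) = t, the number of indices i ∈ {1, …, M} with ‖π(h_i)‖∞ < R·t/M is at most K/(1−R)². -/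

import Mathlib

noncomputable section

/-- The Baker–Campbell–Hausdorff group law on a 2-step nilpotent Lie algebra. -/
def bch {𝔫 : Type*} [LieRing 𝔫] [LieAlgebra ℝ 𝔫] (x y : 𝔫) : 𝔫 :=
  x + y + (1 / 2 : ℝ) • ⁅x, y⁆

/-- The derived subalgebra ⁅𝔫, 𝔫⁆, as a linear subspace: the span of all brackets. -/
def derivedSubalg (𝔫 : Type*) [LieRing 𝔫] [LieAlgebra ℝ 𝔫] : Submodule ℝ 𝔫 :=
  Submodule.span ℝ {z : 𝔫 | ∃ x y : 𝔫, ⁅x, y⁆ = z}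

/-- A 2-step nilpotent Lie algebra is non-singular if every element of `⁅𝔫, 𝔫⁆` is a
bracket `⁅x, y⁆` for every fixed `x ∉ ⁅𝔫, 𝔫⁆`. -/
def Nonsingular (𝔫 : Type*) [LieRing 𝔫] [LieAlgebra ℝ 𝔫] : Prop :=
  ∀ z ∈ derivedSubalg 𝔫, ∀ x : 𝔫, x ∉ derivedSubalg 𝔫 → ∃ y : 𝔫, ⁅x, y⁆ = z

/-- The ordered BCH product `x₁ ∘ x₂ ∘ ⋯ ∘ x_m` of a list of elements. -/
def bchProd {𝔫 : Type*} [LieRing 𝔫] [LieAlgebra ℝ 𝔫] (l : List 𝔫) : 𝔫 :=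
  l.foldr bch 0

/-- `d` is a metric, given as a two-variable distance function. -/
structure IsMetricFun {X : Type*} (d : X → X → ℝ) : Prop where
  refl : ∀ x, d x x = 0
  eq_of_dist_eq_zero : ∀ x y, d x y = 0 → x = y
  symm : ∀ x y, d x y = d y x
  triangle : ∀ x y z, d x z ≤ d x y + d y z

/-- `f` is a norm on the subspace `W`. -/
structure IsNormOn {𝔫 : Type*} [AddCommGroup 𝔫] [Module ℝ 𝔫]
    (W : Submodule ℝ 𝔫) (f : 𝔫 → ℝ) : Prop where
  nonneg : ∀ x ∈ W, 0 ≤ f x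
  eq_zero : ∀ x ∈ W, f x = 0 → x = 0
  smul : ∀ (c : ℝ), ∀ x ∈ W, f (c • x) = |c| * f x
  add_le : ∀ x ∈ W, ∀ y ∈ W, f (x + y) ≤ f x + f y

namespace CardBadAux

variable {𝔫 : Type*} [LieRing 𝔫] [LieAlgebra ℝ 𝔫]

theorem lie_mem_derived (x y : 𝔫) : ⁅x, y⁆ ∈ derivedSubalg 𝔫 :=
  Submodule.subset_span ⟨x, y, rfl⟩

theorem central_left (h2 : ∀ x y z : 𝔫, ⁅⁅x, y⁆, z⁆ = 0) {z : 𝔫}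
    (hz : z ∈ derivedSubalg 𝔫) (a : 𝔫) : ⁅z, a⁆ = 0 := by
  induction hz using Submodule.span_induction with
  | mem x hx => obtain ⟨u, v, rfl⟩ := hx; exact h2 u v a
  | zero => simp
  | add x y hx hy ihx ihy => simp [add_lie, ihx, ihy]
  | smul c x hx ih => simp [smul_lie, ih]

theorem central_right (h2 : ∀ x y z : 𝔫, ⁅⁅x, y⁆, z⁆ = 0) {z : 𝔫}
    (hz : z ∈ derivedSubalg 𝔫) (a : 𝔫) : ⁅a, z⁆ = 0 := by
  rw [← lie_skew, central_left h2 hz, neg_zero]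

@[simp] theorem bch_zero_right (x : 𝔫) : bch x 0 = x := by simp [bch]

@[simp] theorem bch_zero_left (y : 𝔫) : bch 0 y = y := by simp [bch]

theorem bch_neg_self (a : 𝔫) : bch a (-a) = 0 := by simp [bch]

theorem bchProd_cons (a : 𝔫) (l : List 𝔫) : bchProd (a :: l) = bch a (bchProd l) := rfl

theorem bch_central_right (h2 : ∀ x y z : 𝔫, ⁅⁅x, y⁆, z⁆ = 0) {z : 𝔫}
    (hz : z ∈ derivedSubalg 𝔫) (a : 𝔫) : bch a z = a + z := by
  simp [bch, central_right h2 hz]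

theorem commutator_bch (h2 : ∀ x y z : 𝔫, ⁅⁅x, y⁆, z⁆ = 0) (a b : 𝔫) :
    bch (bch (bch a b) (-a)) (-b) = ⁅a, b⁆ := by
  have h2' : ∀ x y z : 𝔫, ⁅z, ⁅x, y⁆⁆ = 0 := fun x y z =>
    central_right h2 (lie_mem_derived x y) z
  have hba : ⁅b, a⁆ = -⁅a, b⁆ := by rw [← lie_skew]
  simp only [bch, lie_add, add_lie, lie_neg, neg_lie, lie_smul, smul_lie, lie_self,
    h2, h2', hba, smul_zero, neg_neg, neg_zero, add_zero, zero_add, smul_neg]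
  module

theorem bchProd_shift (h2 : ∀ x y z : 𝔫, ⁅⁅x, y⁆, z⁆ = 0) :
    ∀ (M : ℕ) (f g : Fin M → 𝔫), (∀ i, f i - g i ∈ derivedSubalg 𝔫) →
      bchProd (List.ofFn f) = bchProd (List.ofFn g) + ∑ i, (f i - g i) := by
  intro M
  induction M with
  | zero => intro f g _; simp [bchProd]
  | succ M ih =>
    intro f g hfg
    have hT : (∑ i : Fin M, (f i.succ - g i.succ)) ∈ derivedSubalg 𝔫 :=
      Submodule.sum_mem _ fun i _ => hfg i.succ
    have h0 : f 0 - g 0 ∈ derivedSubalg 𝔫 := hfg 0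
    rw [List.ofFn_succ, List.ofFn_succ, bchProd_cons, bchProd_cons,
      ih (fun i => f i.succ) (fun i => g i.succ) (fun i => hfg i.succ)]
    have hf0 : f 0 = g 0 + (f 0 - g 0) := by abel
    set Q := bchProd (List.ofFn fun i : Fin M => g i.succ) with hQ
    set T := ∑ i : Fin M, (f i.succ - g i.succ) with hTdef
    set z0 := f 0 - g 0 with hz0
    have hbr : ⁅g 0 + z0, Q + T⁆ = ⁅g 0, Q⁆ := by
      rw [add_lie, lie_add, lie_add, central_left h2 h0, central_right h2 hT,
        central_right h2 hT]
      simp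
    have : bch (f 0) (Q + T) = bch (g 0) Q + (z0 + T) := by
      rw [hf0]; simp only [bch, hbr]; abel
    rw [this, Fin.sum_univ_succ]

theorem d_bch_le {d : 𝔫 → 𝔫 → ℝ} (hd : IsMetricFun d)
    (hdLeft : ∀ g x y : 𝔫, d (bch g x) (bch g y) = d x y) (a b : 𝔫) :
    d 0 (bch a b) ≤ d 0 a + d 0 b := by
  have h1 : d a (bch a b) = d 0 b := by
    rw [← hdLeft a 0 b, bch_zero_right]
  calc d 0 (bch a b) ≤ d 0 a + d a (bch a b) := hd.triangle _ _ _
    _ = d 0 a + d 0 b := by rw [h1]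

theorem d_neg {d : 𝔫 → 𝔫 → ℝ} (hd : IsMetricFun d)
    (hdLeft : ∀ g x y : 𝔫, d (bch g x) (bch g y) = d x y) (a : 𝔫) :
    d 0 (-a) = d 0 a := by
  have : d (bch a 0) (bch a (-a)) = d 0 (-a) := hdLeft a 0 (-a)
  rw [bch_zero_right, bch_neg_self] at this
  rw [← this, hd.symm]

theorem d_bchProd_le {d : 𝔫 → 𝔫 → ℝ} (hd : IsMetricFun d)
    (hdLeft : ∀ g x y : 𝔫, d (bch g x) (bch g y) = d x y) :
    ∀ (M : ℕ) (f : Fin M → 𝔫),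
      d 0 (bchProd (List.ofFn f)) ≤ ∑ i, d 0 (f i) := by
  intro M
  induction M with
  | zero => intro f; simp [bchProd, hd.refl]
  | succ M ih =>
    intro f
    rw [List.ofFn_succ, bchProd_cons, Fin.sum_univ_succ]
    calc d 0 (bch (f 0) (bchProd (List.ofFn fun i : Fin M => f i.succ)))
        ≤ d 0 (f 0) + d 0 (bchProd (List.ofFn fun i : Fin M => f i.succ)) :=
          d_bch_le hd hdLeft _ _
      _ ≤ d 0 (f 0) + ∑ i : Fin M, d 0 (f i.succ) := by
          have := ih fun i : Fin M => f i.succ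
          linarith

theorem normOn_zero {𝔪 : Type*} [AddCommGroup 𝔪] [Module ℝ 𝔪] {W : Submodule ℝ 𝔪}
    {f : 𝔪 → ℝ} (hf : IsNormOn W f) : f 0 = 0 := by
  have := hf.smul 0 0 (zero_mem W)
  simpa using this

theorem normOn_sum_le {𝔪 : Type*} [AddCommGroup 𝔪] [Module ℝ 𝔪] {W : Submodule ℝ 𝔪}
    {f : 𝔪 → ℝ} (hf : IsNormOn W f) {ι : Type*} (s : Finset ι) (g : ι → 𝔪)
    (hg : ∀ i ∈ s, g i ∈ W) : f (∑ i ∈ s, g i) ≤ ∑ i ∈ s, f (g i) := by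
  classical
  induction s using Finset.cons_induction with
  | empty => simp [normOn_zero hf]
  | cons a s ha ih =>
    rw [Finset.sum_cons, Finset.sum_cons]
    have hs : (∑ i ∈ s, g i) ∈ W := Submodule.sum_mem _ fun i hi => hg i (Finset.mem_cons_of_mem hi)
    calc f (g a + ∑ i ∈ s, g i) ≤ f (g a) + f (∑ i ∈ s, g i) :=
          hf.add_le _ (hg a (Finset.mem_cons_self a s)) _ hs
      _ ≤ f (g a) + ∑ i ∈ s, f (g i) := by
          have := ih fun i hi => hg i (Finset.mem_cons_of_mem hi)
          linarith

theorem mem_derived_of_pi_eq_zero {V : Submodule ℝ 𝔫} (hV : IsCompl V (derivedSubalg 𝔫))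
    {π : 𝔫 →ₗ[ℝ] 𝔫} (hπid : ∀ v ∈ V, π v = v) (hπker : ∀ z ∈ derivedSubalg 𝔫, π z = 0)
    (x : 𝔫) (hx : π x = 0) : x ∈ derivedSubalg 𝔫 := by
  have hxmem : x ∈ V ⊔ derivedSubalg 𝔫 := by rw [hV.sup_eq_top]; exact Submodule.mem_top
  obtain ⟨a, ha, b, hb, rfl⟩ := Submodule.mem_sup.1 hxmem
  have h1 : π (a + b) = a := by rw [map_add, hπid a ha, hπker b hb, add_zero]
  rw [hx] at h1
  rw [← h1, zero_add]
  exact hb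

theorem lie_pi (h2 : ∀ x y z : 𝔫, ⁅⁅x, y⁆, z⁆ = 0)
    {V : Submodule ℝ 𝔫} (hV : IsCompl V (derivedSubalg 𝔫))
    {π : 𝔫 →ₗ[ℝ] 𝔫} (hπmem : ∀ x : 𝔫, π x ∈ V)
    (hπid : ∀ v ∈ V, π v = v) (hπker : ∀ z ∈ derivedSubalg 𝔫, π z = 0)
    (a b : 𝔫) : ⁅a, b⁆ = ⁅π a, π b⁆ := by
  have hππ : ∀ x : 𝔫, π (π x) = π x := fun x => hπid _ (hπmem x)
  have h1 : a - π a ∈ derivedSubalg 𝔫 :=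
    mem_derived_of_pi_eq_zero hV hπid hπker _ (by rw [map_sub, hππ, sub_self])
  have h1' : b - π b ∈ derivedSubalg 𝔫 :=
    mem_derived_of_pi_eq_zero hV hπid hπker _ (by rw [map_sub, hππ, sub_self])
  have e1 : ∀ c, ⁅a - π a, c⁆ = (0 : 𝔫) := central_left h2 h1
  have e2 : ∀ c, ⁅c, b - π b⁆ = (0 : 𝔫) := central_right h2 h1'
  calc ⁅a, b⁆ = ⁅(a - π a) + π a, (b - π b) + π b⁆ := by norm_num
    _ = ⁅π a, π b⁆ := by rw [add_lie, lie_add, lie_add, e1, e1, e2]; simp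

theorem sqrt_bound [FiniteDimensional ℝ 𝔫]
    (h2 : ∀ x y z : 𝔫, ⁅⁅x, y⁆, z⁆ = 0)
    (hns : Nonsingular 𝔫)
    (V : Submodule ℝ 𝔫) (hV : IsCompl V (derivedSubalg 𝔫))
    (π : 𝔫 →ₗ[ℝ] 𝔫) (hπmem : ∀ x : 𝔫, π x ∈ V) (hπid : ∀ v ∈ V, π v = v)
    (hπker : ∀ z ∈ derivedSubalg 𝔫, π z = 0)
    (nV : 𝔫 → ℝ) (hnV : IsNormOn V nV)
    (nZ : 𝔫 → ℝ) (hnZ : IsNormOn (derivedSubalg 𝔫) nZ)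
    (d : 𝔫 → 𝔫 → ℝ) (hd : IsMetricFun d)
    (hdLeft : ∀ g x y : 𝔫, d (bch g x) (bch g y) = d x y)
    (hball : ∀ R : ℝ, 0 < R →
      π '' {h : 𝔫 | d 0 h ≤ R} = {v : 𝔫 | v ∈ V ∧ nV v ≤ R}) :
    ∃ C : ℝ, 0 < C ∧ ∀ z ∈ derivedSubalg 𝔫, d 0 z ≤ C * Real.sqrt (nZ z) := by
  classical
  by_cases htriv : ∀ x : 𝔫, x ∈ derivedSubalg 𝔫
  · -- all brackets vanish, so the derived subalgebra is trivial
    have hall : ∀ z ∈ derivedSubalg 𝔫, z = (0 : 𝔫) := by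
      have : derivedSubalg 𝔫 ≤ ⊥ := by
        rw [derivedSubalg, Submodule.span_le]
        rintro w ⟨x, y, rfl⟩
        exact central_left h2 (htriv x) y
      intro z hz
      simpa using this hz
    refine ⟨1, one_pos, fun z hz => ?_⟩
    rw [hall z hz, hd.refl]
    have := hnZ.nonneg z hz
    positivity
  · push_neg at htriv
    obtain ⟨x₀, hx₀⟩ := htriv
    -- a linear right inverse to y ↦ ⁅x₀, y⁆
    let B : 𝔫 →ₗ[ℝ] ↥(derivedSubalg 𝔫) :=
      { toFun := fun y => ⟨⁅x₀, y⁆, lie_mem_derived x₀ y⟩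
        map_add' := fun a b => Subtype.ext (lie_add x₀ a b)
        map_smul' := fun c a => Subtype.ext (lie_smul c x₀ a) }
    have hBsurj : LinearMap.range B = ⊤ := by
      rw [LinearMap.range_eq_top]
      rintro ⟨z, hz⟩
      obtain ⟨y, hy⟩ := hns z hz x₀ hx₀
      exact ⟨y, Subtype.ext hy⟩
    obtain ⟨s, hs⟩ := B.exists_rightInverse_of_surjective hBsurj
    have hsinv : ∀ z : ↥(derivedSubalg 𝔫), ⁅x₀, s z⁆ = (z : 𝔫) := by
      intro z
      have := congrArg Subtype.val (LinearMap.congr_fun hs z)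
      simpa [B] using this
    -- normed space structures
    letI : NormedAddCommGroup ↥(derivedSubalg 𝔫) := AddGroupNorm.toNormedAddCommGroup
      { toFun := fun x => nZ x
        map_zero' := by simpa using normOn_zero hnZ
        add_le' := fun r t => hnZ.add_le _ r.2 _ t.2
        neg' := fun r => by
          have := hnZ.smul (-1) r r.2
          simpa using this
        eq_zero_of_map_eq_zero' := fun x hx => Subtype.ext (hnZ.eq_zero _ x.2 hx) }
    letI : NormedSpace ℝ ↥(derivedSubalg 𝔫) :=
      { norm_smul_le := fun c x => le_of_eq (by
          show nZ ((c • x : ↥(derivedSubalg 𝔫)) : 𝔫) = ‖c‖ * nZ x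
          rw [Submodule.coe_smul, hnZ.smul c _ x.2, Real.norm_eq_abs] ) }
    letI : NormedAddCommGroup ↥V := AddGroupNorm.toNormedAddCommGroup
      { toFun := fun x => nV x
        map_zero' := by simpa using normOn_zero hnV
        add_le' := fun r t => hnV.add_le _ r.2 _ t.2
        neg' := fun r => by
          have := hnV.smul (-1) r r.2
          simpa using this
        eq_zero_of_map_eq_zero' := fun x hx => Subtype.ext (hnV.eq_zero _ x.2 hx) }
    letI : NormedSpace ℝ ↥V :=
      { norm_smul_le := fun c x => le_of_eq (by
          show nV ((c • x : ↥V) : 𝔫) = ‖c‖ * nV x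
          rw [Submodule.coe_smul, hnV.smul c _ x.2, Real.norm_eq_abs] ) }
    -- the composite map is bounded
    let G : ↥(derivedSubalg 𝔫) →ₗ[ℝ] ↥V :=
      LinearMap.codRestrict V (π ∘ₗ s) (fun z => hπmem _)
    let Gc : ↥(derivedSubalg 𝔫) →L[ℝ] ↥V := ⟨G, G.continuous_of_finiteDimensional⟩
    set C₀ : ℝ := ‖Gc‖ with hC₀
    have hC₀0 : 0 ≤ C₀ := norm_nonneg _
    have hGb : ∀ z : ↥(derivedSubalg 𝔫), nV (π (s z)) ≤ C₀ * nZ (z : 𝔫) :=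
      fun z => Gc.le_opNorm z
    -- the fixed horizontal direction
    set v : 𝔫 := π x₀ with hv
    have hvV : v ∈ V := hπmem x₀
    set α : ℝ := nV v with hα
    have hα0 : 0 < α := by
      rcases lt_or_eq_of_le (hnV.nonneg v hvV) with h | h
      · exact h
      · exfalso
        apply hx₀
        apply mem_derived_of_pi_eq_zero hV hπid hπker
        exact hnV.eq_zero v hvV h.symm
    refine ⟨2 * (α * C₀ + 2), by positivity, fun z hz => ?_⟩
    have hn0 : 0 ≤ nZ z := hnZ.nonneg z hz
    rcases eq_or_lt_of_le hn0 with hn | hn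
    · have hz0 : z = 0 := hnZ.eq_zero z hz hn.symm
      rw [hz0, hd.refl]
      positivity
    · set lam : ℝ := Real.sqrt (nZ z) with hlam
      have hlam0 : 0 < lam := Real.sqrt_pos.2 hn
      set y : 𝔫 := s ⟨z, hz⟩ with hy
      have hyz : ⁅x₀, y⁆ = z := hsinv ⟨z, hz⟩
      have hyb : nV (π y) ≤ C₀ * nZ z := hGb ⟨z, hz⟩
      -- horizontal vectors
      set avec : 𝔫 := (lam / α) • v with havec
      set bvec : 𝔫 := (α / lam) • (π y) with hbvec
      have havV : avec ∈ V := Submodule.smul_mem _ _ hvV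
      have hbvV : bvec ∈ V := Submodule.smul_mem _ _ (hπmem y)
      have hanorm : nV avec = lam := by
        rw [havec, hnV.smul _ _ hvV, abs_of_pos (by positivity), ← hα]
        field_simp
      have hbnorm : nV bvec ≤ (α * C₀ + 1) * lam := by
        rw [hbvec, hnV.smul _ _ (hπmem y), abs_of_pos (by positivity)]
        have h1 : α / lam * nV (π y) ≤ α / lam * (C₀ * nZ z) := by
          apply mul_le_mul_of_nonneg_left hyb (by positivity)
        have h2 : nZ z = lam * lam := (Real.mul_self_sqrt hn0).symm
        calc α / lam * nV (π y) ≤ α / lam * (C₀ * (lam * lam)) := by rw [← h2]; exact h1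
          _ = α * C₀ * lam := by field_simp
          _ ≤ (α * C₀ + 1) * lam := by nlinarith
      -- realize them by group elements
      have hball1 := hball lam hlam0
      have hmem1 : avec ∈ {w : 𝔫 | w ∈ V ∧ nV w ≤ lam} := ⟨havV, le_of_eq hanorm⟩
      rw [← hball1] at hmem1
      obtain ⟨a, hda, haπ⟩ := hmem1
      have hball2 := hball ((α * C₀ + 1) * lam) (by positivity)
      have hmem2 : bvec ∈ {w : 𝔫 | w ∈ V ∧ nV w ≤ (α * C₀ + 1) * lam} := ⟨hbvV, hbnorm⟩
      rw [← hball2] at hmem2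
      obtain ⟨b, hdb, hbπ⟩ := hmem2
      have hda' : d 0 a ≤ lam := hda
      have hdb' : d 0 b ≤ (α * C₀ + 1) * lam := hdb
      -- the commutator of a and b is z
      have hab : ⁅a, b⁆ = z := by
        rw [lie_pi h2 hV hπmem hπid hπker, haπ, hbπ, havec, hbvec, smul_lie, lie_smul,
          smul_smul]
        have : lam / α * (α / lam) = 1 := by field_simp
        rw [this, one_smul, ← hyz, hv]
        exact (lie_pi h2 hV hπmem hπid hπker x₀ y).symm
      -- distance estimate via the commutator
      have hcomm : bch (bch (bch a b) (-a)) (-b) = z := by rw [commutator_bch h2, hab]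
      have hdz : d 0 z ≤ 2 * (α * C₀ + 2) * lam := by
        have e1 : d 0 z ≤ d 0 (bch (bch a b) (-a)) + d 0 (-b) := by
          rw [← hcomm]; exact d_bch_le hd hdLeft _ _
        have e2 : d 0 (bch (bch a b) (-a)) ≤ d 0 (bch a b) + d 0 (-a) :=
          d_bch_le hd hdLeft _ _
        have e3 : d 0 (bch a b) ≤ d 0 a + d 0 b := d_bch_le hd hdLeft _ _
        have e4 : d 0 (-a) = d 0 a := d_neg hd hdLeft a
        have e5 : d 0 (-b) = d 0 b := d_neg hd hdLeft b
        nlinarith [hda', hdb']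
      exact hdz

end CardBadAux

set_option maxHeartbeats 1000000 in
/-- Proposition 3.1 of the paper: there is `K > 0` such that, whenever a geodesic of
length `t ≥ M` from `0` is divided into `M` pieces of equal length `t/M` with increments
`h₁, …, h_M` (so `d(0, h_i) = t/M` and `d(0, h₁ ∘ ⋯ ∘ h_M) = t`), the number of indices
`i` with `‖π(h_i)‖∞ < R·t/M` is at most `K/(1−R)²`, for every `0 < R < 1`. -/
theorem card_bad_pieces_le {𝔫 : Type*} [LieRing 𝔫] [LieAlgebra ℝ 𝔫]
    [FiniteDimensional ℝ 𝔫]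
    (h2 : ∀ x y z : 𝔫, ⁅⁅x, y⁆, z⁆ = 0)
    (hns : Nonsingular 𝔫)
    (V : Submodule ℝ 𝔫) (hV : IsCompl V (derivedSubalg 𝔫))
    (π : 𝔫 →ₗ[ℝ] 𝔫) (hπmem : ∀ x : 𝔫, π x ∈ V) (hπid : ∀ v ∈ V, π v = v)
    (hπker : ∀ z ∈ derivedSubalg 𝔫, π z = 0)
    (nV : 𝔫 → ℝ) (hnV : IsNormOn V nV)
    (nZ : 𝔫 → ℝ) (hnZ : IsNormOn (derivedSubalg 𝔫) nZ)
    (d : 𝔫 → 𝔫 → ℝ) (hd : IsMetricFun d)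
    (hdLeft : ∀ g x y : 𝔫, d (bch g x) (bch g y) = d x y)
    (hball : ∀ R : ℝ, 0 < R →
      π '' {h : 𝔫 | d 0 h ≤ R} = {v : 𝔫 | v ∈ V ∧ nV v ≤ R})
    (K' : ℝ) (hK' : 0 < K')
    (hKbound : ∀ ρ : ℝ, 1 ≤ ρ → ∀ x y : 𝔫, d 0 x ≤ ρ → d 0 y ≤ ρ →
      bch (-x) y ∈ derivedSubalg 𝔫 → nZ (bch (-x) y) ≤ K' * ρ ^ 2) :
    ∃ K : ℝ, 0 < K ∧ ∀ M : ℕ, 1 ≤ M → ∀ t : ℝ, (M : ℝ) ≤ t →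
      ∀ R : ℝ, 0 < R → R < 1 →
        ∀ h : Fin M → 𝔫, (∀ i, d 0 (h i) = t / M) →
          d 0 (bchProd (List.ofFn h)) = t →
          ((Finset.univ.filter
              fun i : Fin M => nV (π (h i)) < R * (t / M)).card : ℝ) ≤
            K / (1 - R) ^ 2 := by
  obtain ⟨C, hC0, hCd⟩ := CardBadAux.sqrt_bound h2 hns V hV π hπmem hπid hπker
    nV hnV nZ hnZ d hd hdLeft hball
  refine ⟨C ^ 2 * K' + 1, by positivity, ?_⟩
  intro M hM t ht R hR0 hR1 h hdh hdg
  have hM0 : (0 : ℝ) < M := by exact_mod_cast Nat.lt_of_lt_of_le Nat.zero_lt_one hM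
  have hM1 : (1 : ℝ) ≤ M := by exact_mod_cast hM
  set τ : ℝ := t / M with hτdef
  have hτ1 : 1 ≤ τ := by rw [hτdef, le_div_iff₀ hM0]; linarith
  have hτ0 : (0 : ℝ) < τ := lt_of_lt_of_le one_pos hτ1
  have hRτ : 0 < R * τ := by positivity
  -- choose replacements for the bad pieces
  have hex : ∀ i : Fin M, nV (π (h i)) < R * τ →
      ∃ w : 𝔫, d 0 w ≤ R * τ ∧ π w = π (h i) := by
    intro i hi
    have hmem : π (h i) ∈ {v : 𝔫 | v ∈ V ∧ nV v ≤ R * τ} := ⟨hπmem _, le_of_lt hi⟩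
    rw [← hball (R * τ) hRτ] at hmem
    obtain ⟨w, hw, hwπ⟩ := hmem
    exact ⟨w, hw, hwπ⟩
  let h' : Fin M → 𝔫 := fun i =>
    if hb : nV (π (h i)) < R * τ then (hex i hb).choose else h i
  have hπ' : ∀ i, π (h' i) = π (h i) := by
    intro i
    by_cases hb : nV (π (h i)) < R * τ
    · simp only [h', dif_pos hb]; exact (hex i hb).choose_spec.2
    · simp only [h', dif_neg hb]
  have hd'bad : ∀ i, nV (π (h i)) < R * τ → d 0 (h' i) ≤ R * τ := by
    intro i hb
    simp only [h', dif_pos hb]; exact (hex i hb).choose_spec.1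
  have hd'good : ∀ i, ¬ (nV (π (h i)) < R * τ) → h' i = h i := by
    intro i hb
    simp only [h', dif_neg hb]
  -- central corrections
  have hzmem : ∀ i, h i - h' i ∈ derivedSubalg 𝔫 := fun i =>
    CardBadAux.mem_derived_of_pi_eq_zero hV hπid hπker _
      (by rw [map_sub, hπ' i, sub_self])
  have hsplit := CardBadAux.bchProd_shift h2 M h h' hzmem
  set ztot : 𝔫 := ∑ i, (h i - h' i) with hztot
  have hztotmem : ztot ∈ derivedSubalg 𝔫 := Submodule.sum_mem _ fun i _ => hzmem i
  -- the cardinality of the bad set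
  set S : Finset (Fin M) :=
    Finset.univ.filter (fun i : Fin M => nV (π (h i)) < R * τ) with hS
  set m : ℝ := (S.card : ℝ) with hm
  have hm0 : 0 ≤ m := Nat.cast_nonneg _
  -- distance splitting
  have hstep : t ≤ d 0 (bchProd (List.ofFn h')) + d 0 ztot := by
    have hbz : bch (bchProd (List.ofFn h')) ztot = bchProd (List.ofFn h') + ztot :=
      CardBadAux.bch_central_right h2 hztotmem _
    have e : d 0 (bchProd (List.ofFn h)) ≤ d 0 (bchProd (List.ofFn h')) + d 0 ztot := by
      rw [hsplit, ← hbz]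
      exact CardBadAux.d_bch_le hd hdLeft _ _
    rw [hdg] at e
    exact e
  -- bound on the shortened path
  have hA : d 0 (bchProd (List.ofFn h')) ≤ t - m * ((1 - R) * τ) := by
    have hA1 := CardBadAux.d_bchProd_le hd hdLeft M h'
    have hA2 : ∀ i ∈ Finset.univ,
        d 0 (h' i) ≤ τ - (if nV (π (h i)) < R * τ then (1 - R) * τ else 0) := by
      intro i _
      by_cases hb : nV (π (h i)) < R * τ
      · rw [if_pos hb]
        have := hd'bad i hb
        nlinarith
      · rw [if_neg hb, hd'good i hb, hdh i]
        simp
    have hA3 : ∑ i, d 0 (h' i) ≤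
        ∑ i : Fin M, (τ - (if nV (π (h i)) < R * τ then (1 - R) * τ else 0)) :=
      Finset.sum_le_sum hA2
    have hA4 : ∑ i : Fin M, (τ - (if nV (π (h i)) < R * τ then (1 - R) * τ else 0))
        = (M : ℝ) * τ - m * ((1 - R) * τ) := by
      rw [Finset.sum_sub_distrib, Finset.sum_const, ← Finset.sum_filter, ← hS,
        Finset.sum_const, Finset.card_univ, Fintype.card_fin]
      simp [hm, nsmul_eq_mul]
    have hMτ : (M : ℝ) * τ = t := by
      rw [hτdef]; field_simp
    rw [hA4, hMτ] at hA3
    linarith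
  -- bound on the vertical correction
  have hB : nZ ztot ≤ m * (K' * τ ^ 2) := by
    have hB1 : nZ ztot ≤ ∑ i, nZ (h i - h' i) :=
      CardBadAux.normOn_sum_le hnZ _ _ fun i _ => hzmem i
    have hB2 : ∀ i ∈ Finset.univ,
        nZ (h i - h' i) ≤ (if nV (π (h i)) < R * τ then K' * τ ^ 2 else 0) := by
      intro i _
      by_cases hb : nV (π (h i)) < R * τ
      · rw [if_pos hb]
        have hlie : ⁅h' i, h i⁆ = 0 := by
          rw [CardBadAux.lie_pi h2 hV hπmem hπid hπker, hπ' i, lie_self]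
        have hbch : bch (-(h' i)) (h i) = h i - h' i := by
          simp only [bch, neg_lie, hlie, neg_zero, smul_zero, add_zero]
          abel
        have hx : d 0 (h' i) ≤ τ := le_trans (hd'bad i hb) (by nlinarith)
        have hy : d 0 (h i) ≤ τ := le_of_eq (hdh i)
        have := hKbound τ hτ1 (h' i) (h i) hx hy (by rw [hbch]; exact hzmem i)
        rwa [hbch] at this
      · rw [if_neg hb, hd'good i hb]
        simp [CardBadAux.normOn_zero hnZ]
    have hB3 : ∑ i, nZ (h i - h' i) ≤
        ∑ i : Fin M, (if nV (π (h i)) < R * τ then K' * τ ^ 2 else 0) :=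
      Finset.sum_le_sum hB2
    have hB4 : ∑ i : Fin M, (if nV (π (h i)) < R * τ then K' * τ ^ 2 else 0)
        = m * (K' * τ ^ 2) := by
      rw [← Finset.sum_filter, ← hS, Finset.sum_const]
      simp [hm, nsmul_eq_mul]
    linarith
  -- the square-root distance bound
  have hzn0 : 0 ≤ nZ ztot := hnZ.nonneg _ hztotmem
  have hDz : d 0 ztot ≤ C * (Real.sqrt m * Real.sqrt K' * τ) := by
    have e1 : d 0 ztot ≤ C * Real.sqrt (nZ ztot) := hCd _ hztotmem
    have e2 : Real.sqrt (nZ ztot) ≤ Real.sqrt (m * (K' * τ ^ 2)) :=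
      Real.sqrt_le_sqrt hB
    have e3 : Real.sqrt (m * (K' * τ ^ 2)) = Real.sqrt m * Real.sqrt K' * τ := by
      rw [Real.sqrt_mul hm0, Real.sqrt_mul hK'.le, Real.sqrt_sq hτ0.le, mul_assoc]
    rw [e3] at e2
    nlinarith [Real.sqrt_nonneg (nZ ztot)]
  -- combining
  have hkey : m * (1 - R) ≤ C * (Real.sqrt m * Real.sqrt K') := by
    have h5 : m * ((1 - R) * τ) ≤ C * (Real.sqrt m * Real.sqrt K' * τ) := by linarith
    have h6 : m * (1 - R) * τ ≤ C * (Real.sqrt m * Real.sqrt K') * τ := by linarith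
    exact le_of_mul_le_mul_right h6 hτ0
  -- final arithmetic
  clear_value m
  rw [le_div_iff₀ (by nlinarith : (0:ℝ) < (1 - R) ^ 2)]
  have hsm : Real.sqrt m ^ 2 = m := Real.sq_sqrt hm0
  have hsK : Real.sqrt K' ^ 2 = K' := Real.sq_sqrt hK'.le
  have hsm0 : 0 ≤ Real.sqrt m := Real.sqrt_nonneg m
  have hsK0 : 0 ≤ Real.sqrt K' := Real.sqrt_nonneg K'
  have hgoal : m * (1 - R) ^ 2 ≤ C ^ 2 * K' + 1 := by
    nlinarith [sq_nonneg (C * Real.sqrt K' - Real.sqrt m * (1 - R)), hkey,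
      mul_le_mul_of_nonneg_right hkey (by linarith : (0:ℝ) ≤ 1 - R)]
  linarith
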